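/- Let n = k + l. Let P = [[I_k, 0], [0, 0]] (n×n) and S = [[S₁₁, 0], [0, S₂₂]] (n×n block diagonal) with S₁₁ = S₁₁ᵀ a k×k matrix and S₂₂ = S₂₂ᵀ an invertible l×l matrix. Let A = [[A₁₁, A₁₂], [A₂₁, A₂₂]] (n×n), B = [B₁; B₂] (n×m), C = [C₁, C₂] (m×n), D (m×m) be real matrices, partitioned conformably. If the symmetric matrix [[Sᵀ A P + Pᵀ Aᵀ S, Sᵀ B − Pᵀ Cᵀ], [Bᵀ S − C P, −D − Dᵀ]] is negative semidefinite, then A₂₁ = 0, B₂ = 0, and moreover the reduced symmetric matrix [[A₁₁ᵀ S₁₁ + S₁₁ A₁₁, S₁₁ B₁ − C₁ᵀ], [B₁ᵀ S₁₁ − C₁, −D − Dᵀ]] is negative semidefinite. -/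

import Mathlib

open Matrix

/-- A real symmetric matrix `T` is negative semidefinite if `vᵀ T v ≤ 0` for all
vectors `v`. -/
def NegSemidefR {ι : Type*} [Fintype ι] (T : Matrix ι ι ℝ) : Prop :=
  T.IsSymm ∧ ∀ v : ι → ℝ, v ⬝ᵥ (T *ᵥ v) ≤ 0

lemma negSemidefR_iff_posSemidef_neg {ι : Type*} [Fintype ι] (T : Matrix ι ι ℝ) :
    NegSemidefR T ↔ (-T).PosSemidef := by
  constructor
  · rintro ⟨hs, hq⟩
    refine posSemidef_iff_dotProduct_mulVec.mpr ⟨?_, fun x => ?_⟩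
    · rw [Matrix.IsHermitian, conjTranspose_eq_transpose_of_trivial, transpose_neg, hs]
    · have := hq x
      simp only [neg_mulVec, dotProduct_neg, star_trivial]
      linarith
  · intro hP
    obtain ⟨hs, hq⟩ := posSemidef_iff_dotProduct_mulVec.mp hP
    constructor
    · have := hs.eq
      rw [conjTranspose_eq_transpose_of_trivial, transpose_neg, neg_inj] at this
      exact this
    · intro v
      have := hq v
      simp only [neg_mulVec, dotProduct_neg, star_trivial] at this
      linarith

lemma psd_row_zero {ι : Type*} [Fintype ι] [DecidableEq ι] {N : Matrix ι ι ℝ}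
    (hN : N.PosSemidef) {i : ι} (hii : N i i = 0) (j : ι) : N i j = 0 := by
  obtain ⟨B, rfl⟩ : ∃ B : Matrix ι ι ℝ, N = Bᴴ * B := by
    open scoped MatrixOrder in
    simpa [star_eq_conjTranspose] using
      CStarAlgebra.nonneg_iff_eq_star_mul_self.mp (Matrix.nonneg_iff_posSemidef.mpr hN)
  have hcol : ∀ a, B a i = 0 := by
    have h0 : ∑ a, B a i * B a i = 0 := by
      simpa [Matrix.mul_apply, conjTranspose_apply] using hii
    intro a
    have := (Finset.sum_eq_zero_iff_of_nonneg (fun a _ => mul_self_nonneg (B a i))).mp h0 a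
      (Finset.mem_univ a)
    nlinarith [this]
  simp [Matrix.mul_apply, conjTranspose_apply, hcol]

lemma myFromRows_sub {R : Type*} [Ring R] {m₁ m₂ n : Type*}
    (A : Matrix m₁ n R) (B : Matrix m₂ n R) (C : Matrix m₁ n R) (D : Matrix m₂ n R) :
    fromRows A B - fromRows C D = fromRows (A - C) (B - D) := by
  ext (i | i) j <;> simp

lemma myFromColumns_sub {R : Type*} [Ring R] {m n₁ n₂ : Type*}
    (A : Matrix m n₁ R) (B : Matrix m n₂ R) (C : Matrix m n₁ R) (D : Matrix m n₂ R) :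
    fromCols A B - fromCols C D = fromCols (A - C) (B - D) := by
  ext i (j | j) <;> simp

lemma cstar_mul_eq {l m n : Type*} [Fintype m] (M : Matrix l m ℝ) (N : Matrix m n ℝ) :
    @HMul.hMul (Matrix l m ℝ) (Matrix m n ℝ) (Matrix l n ℝ)
      CStarMatrix.instHMulOfFintypeOfMulOfAddCommMonoid M N = M * N :=
  rfl

theorem stmt_7 {k l m : ℕ}
    (A11 : Matrix (Fin k) (Fin k) ℝ) (A12 : Matrix (Fin k) (Fin l) ℝ)
    (A21 : Matrix (Fin l) (Fin k) ℝ) (A22 : Matrix (Fin l) (Fin l) ℝ)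
    (S11 : Matrix (Fin k) (Fin k) ℝ) (S22 : Matrix (Fin l) (Fin l) ℝ)
    (B1 : Matrix (Fin k) (Fin m) ℝ) (B2 : Matrix (Fin l) (Fin m) ℝ)
    (C1 : Matrix (Fin m) (Fin k) ℝ) (C2 : Matrix (Fin m) (Fin l) ℝ)
    (D : Matrix (Fin m) (Fin m) ℝ)
    (hS11 : S11ᵀ = S11) (hS22 : S22ᵀ = S22) (hS22inv : IsUnit S22)
    (h : NegSemidefR (Matrix.fromBlocks
      ((Matrix.fromBlocks S11 0 0 S22)ᵀ * (Matrix.fromBlocks A11 A12 A21 A22) *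
          (Matrix.fromBlocks 1 0 0 0) +
        (Matrix.fromBlocks 1 0 0 0)ᵀ * (Matrix.fromBlocks A11 A12 A21 A22)ᵀ *
          (Matrix.fromBlocks S11 0 0 S22))
      ((Matrix.fromBlocks S11 0 0 S22)ᵀ * (Matrix.fromRows B1 B2) -
        (Matrix.fromBlocks 1 0 0 0)ᵀ * (Matrix.fromCols C1 C2)ᵀ)
      ((Matrix.fromRows B1 B2)ᵀ * (Matrix.fromBlocks S11 0 0 S22) -
        (Matrix.fromCols C1 C2) * (Matrix.fromBlocks 1 0 0 0))
      (-D - Dᵀ))) :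
    A21 = 0 ∧ B2 = 0 ∧
      NegSemidefR (Matrix.fromBlocks
        (A11ᵀ * S11 + S11 * A11) (S11 * B1 - C1ᵀ)
        (B1ᵀ * S11 - C1) (-D - Dᵀ)) := by
  have hT : (Matrix.fromBlocks
      ((Matrix.fromBlocks S11 0 0 S22)ᵀ * (Matrix.fromBlocks A11 A12 A21 A22) *
          (Matrix.fromBlocks 1 0 0 0) +
        (Matrix.fromBlocks 1 0 0 0)ᵀ * (Matrix.fromBlocks A11 A12 A21 A22)ᵀ *
          (Matrix.fromBlocks S11 0 0 S22))
      ((Matrix.fromBlocks S11 0 0 S22)ᵀ * (Matrix.fromRows B1 B2) -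
        (Matrix.fromBlocks 1 0 0 0)ᵀ * (Matrix.fromCols C1 C2)ᵀ)
      ((Matrix.fromRows B1 B2)ᵀ * (Matrix.fromBlocks S11 0 0 S22) -
        (Matrix.fromCols C1 C2) * (Matrix.fromBlocks 1 0 0 0))
      (-D - Dᵀ)) =
    (Matrix.fromBlocks
      (Matrix.fromBlocks (A11ᵀ * S11 + S11 * A11) (A21ᵀ * S22) (S22 * A21) 0)
      (Matrix.fromRows (S11 * B1 - C1ᵀ) (S22 * B2))
      (Matrix.fromCols (B1ᵀ * S11 - C1) (B2ᵀ * S22))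
      (-D - Dᵀ)) := by
    simp only [cstar_mul_eq]
    rw [fromBlocks_transpose, fromBlocks_transpose, transpose_fromCols, transpose_fromRows,
      transpose_one, transpose_zero, hS11, hS22]
    rw [fromBlocks_transpose]
    simp [fromBlocks_multiply, fromBlocks_mul_fromRows, fromCols_mul_fromBlocks,
      fromBlocks_add, myFromRows_sub, myFromColumns_sub, add_comm]
  rw [hT, negSemidefR_iff_posSemidef_neg] at h
  obtain ⟨u, hu⟩ := hS22inv
  have hz : ∀ (b : Fin l) j,
      (-(Matrix.fromBlocks
        (Matrix.fromBlocks (A11ᵀ * S11 + S11 * A11) (A21ᵀ * S22) (S22 * A21) 0)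
        (Matrix.fromRows (S11 * B1 - C1ᵀ) (S22 * B2))
        (Matrix.fromCols (B1ᵀ * S11 - C1) (B2ᵀ * S22))
        (-D - Dᵀ))) (Sum.inl (Sum.inr b)) j = 0 := by
    intro b j
    exact psd_row_zero h (by simp) j
  have h21 : S22 * A21 = 0 := by
    ext b a
    have := hz b (Sum.inl (Sum.inl a))
    simpa using this
  have hB2 : S22 * B2 = 0 := by
    ext b c
    have := hz b (Sum.inr c)
    simpa using this
  have hA21 : A21 = 0 := by
    calc A21 = ((↑u⁻¹ : Matrix (Fin l) (Fin l) ℝ) * S22) * A21 := by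
          rw [← hu, Units.inv_mul, Matrix.one_mul]
      _ = (↑u⁻¹ : Matrix (Fin l) (Fin l) ℝ) * (S22 * A21) := by rw [Matrix.mul_assoc]
      _ = 0 := by rw [h21, Matrix.mul_zero]
  have hB2' : B2 = 0 := by
    calc B2 = ((↑u⁻¹ : Matrix (Fin l) (Fin l) ℝ) * S22) * B2 := by
          rw [← hu, Units.inv_mul, Matrix.one_mul]
      _ = (↑u⁻¹ : Matrix (Fin l) (Fin l) ℝ) * (S22 * B2) := by rw [Matrix.mul_assoc]
      _ = 0 := by rw [hB2, Matrix.mul_zero]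
  refine ⟨hA21, hB2', ?_⟩
  rw [negSemidefR_iff_posSemidef_neg]
  have hsub := h.submatrix (Sum.elim (Sum.inl ∘ Sum.inl) Sum.inr :
    Fin k ⊕ Fin m → (Fin k ⊕ Fin l) ⊕ Fin m)
  have hEq : (Matrix.fromBlocks
        (A11ᵀ * S11 + S11 * A11) (S11 * B1 - C1ᵀ)
        (B1ᵀ * S11 - C1) (-D - Dᵀ)) =
      (Matrix.fromBlocks
        (Matrix.fromBlocks (A11ᵀ * S11 + S11 * A11) (A21ᵀ * S22) (S22 * A21) 0)
        (Matrix.fromRows (S11 * B1 - C1ᵀ) (S22 * B2))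
        (Matrix.fromCols (B1ᵀ * S11 - C1) (B2ᵀ * S22))
        (-D - Dᵀ)).submatrix (Sum.elim (Sum.inl ∘ Sum.inl) Sum.inr)
          (Sum.elim (Sum.inl ∘ Sum.inl) Sum.inr) := by
    ext (a | c) (a' | c') <;> simp
  rw [hEq]
  exact hsub
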